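/- For every integer w ≥ 1 and every even integer n ≥ 0, the partition function of loops satisfies Z_{n,w}(2,1) = (2^{n}/(2(w+1))) · Σ_{k=0}^{2w+1} cosⁿ((2k+1)π/(2w+2)). -/

import Mathlib

/-- A loop of length `n` in the slit of width `w`: a nearest-neighbour path of heights
`h 0, …, h n` with `h 0 = h n = 0` and all heights in `{0, …, w}` (enforced by taking
values in `Fin (w+1)`). -/
def IsLoop {n w : ℕ} (h : Fin (n + 1) → Fin (w + 1)) : Prop :=
  h 0 = 0 ∧ h (Fin.last n) = 0 ∧
    ∀ i : Fin n, |((h i.succ : ℤ) - (h i.castSucc : ℤ))| = 1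

instance {n w : ℕ} (h : Fin (n + 1) → Fin (w + 1)) : Decidable (IsLoop h) := by
  unfold IsLoop; infer_instance

/-- The partition function of loops,
`Z_{n,w}(a,b) = Σ_h a^{u(h)} b^{v(h)}`, where `u(h)` counts visits to the bottom wall
(excluding the zeroth vertex) and `v(h)` counts visits to the top wall. -/
noncomputable def Z (n w : ℕ) (a b : ℝ) : ℝ :=
  ∑ h : Fin (n + 1) → Fin (w + 1),
    if IsLoop h then
      a ^ (Finset.univ.filter fun i : Fin (n + 1) => i ≠ 0 ∧ (h i : ℕ) = 0).card *
      b ^ (Finset.univ.filter fun i : Fin (n + 1) => (h i : ℕ) = w).card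
    else 0

open Finset Real

noncomputable def F (w : ℕ) (x y : Fin (w+1)) : ℝ :=
  (if |((y:ℤ) - (x:ℤ))| = 1 then 1 else 0) * (if (y:ℕ) = 0 then 2 else 1)

noncomputable def Wf (n w : ℕ) (i j : Fin (w+1)) : ℝ :=
  ∑ h : Fin (n+1) → Fin (w+1),
    if h 0 = i ∧ h (Fin.last n) = j then ∏ t : Fin n, F w (h t.castSucc) (h t.succ) else 0

noncomputable def theta (w k : ℕ) : ℝ := (2*(k:ℝ)+1) * Real.pi / (2*((w:ℝ)+1))

lemma adj_sum (w : ℕ) (c : ℕ → ℝ) (y : Fin (w+1)) :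
    ∑ x : Fin (w+1), (if |((y:ℤ) - (x:ℤ))| = 1 then c (x:ℕ) else 0)
    = (if (y:ℕ)+1 ≤ w then c ((y:ℕ)+1) else 0) + (if 1 ≤ (y:ℕ) then c ((y:ℕ)-1) else 0) := by
  have hterm : ∀ x : Fin (w+1),
      (if |((y:ℤ) - (x:ℤ))| = 1 then c (x:ℕ) else 0)
      = (if (x:ℕ) = (y:ℕ)+1 then c (x:ℕ) else 0) + (if (x:ℕ)+1 = (y:ℕ) then c (x:ℕ) else 0) := by
    intro x
    have hiff : |((y:ℤ) - (x:ℤ))| = 1 ↔ ((x:ℕ) = (y:ℕ)+1 ∨ (x:ℕ)+1 = (y:ℕ)) := by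
      rw [abs_eq (by norm_num : (0:ℤ) ≤ 1)]
      omega
    simp only [hiff]
    clear hiff
    split_ifs <;> try ring
    all_goals omega
  rw [Finset.sum_congr rfl (fun x _ => hterm x), Finset.sum_add_distrib]
  congr 1
  · by_cases hy : (y:ℕ)+1 ≤ w
    · rw [if_pos hy, Finset.sum_eq_single (⟨(y:ℕ)+1, by omega⟩ : Fin (w+1))]
      · simp
      · intro x _ hx
        rw [if_neg]
        intro hc
        exact hx (by ext; simpa using hc)
      · simp
    · rw [if_neg hy]
      apply Finset.sum_eq_zero
      intro x _
      rw [if_neg]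
      have := x.isLt
      omega
  · by_cases hy : 1 ≤ (y:ℕ)
    · rw [if_pos hy, Finset.sum_eq_single (⟨(y:ℕ)-1, by omega⟩ : Fin (w+1))]
      · rw [if_pos (by simp; omega)]
      · intro x _ hx
        rw [if_neg]
        intro hc
        exact hx (by ext; simp; omega)
      · simp
    · rw [if_neg hy]
      apply Finset.sum_eq_zero
      intro x _
      rw [if_neg]
      omega

lemma cos_succ_theta (w k : ℕ) (hw1 : 0 < w) :
    Real.cos (((w:ℝ)+1) * theta w k) = 0 := by
  have : ((w:ℝ)+1) * theta w k = (k:ℝ)*Real.pi + Real.pi/2 := by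
    unfold theta
    field_simp
  rw [this, Real.cos_add, Real.cos_pi_div_two, Real.sin_pi_div_two]
  rw [Real.sin_nat_mul_pi]
  ring

lemma eigen_eq (w k : ℕ) (hw : 1 ≤ w) (y : Fin (w+1)) :
    ∑ x : Fin (w+1), Real.cos ((x:ℕ) * theta w k) * F w x y
      = (2 * Real.cos (theta w k)) * Real.cos ((y:ℕ) * theta w k) := by
  set θ := theta w k with hθ
  have hstep : ∀ x : Fin (w+1), Real.cos ((x:ℕ) * θ) * F w x y
      = (if |((y:ℤ) - (x:ℤ))| = 1 then Real.cos ((x:ℕ)*θ) else 0) * (if (y:ℕ) = 0 then 2 else 1) := by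
    intro x
    unfold F
    split_ifs <;> ring
  rw [Finset.sum_congr rfl (fun x _ => hstep x), ← Finset.sum_mul,
    adj_sum w (fun m => Real.cos ((m:ℕ) * θ)) y]
  have hrec : ∀ m : ℕ, Real.cos (((m:ℝ)+1) * θ) + Real.cos (((m:ℝ)-1) * θ)
      = 2 * Real.cos θ * Real.cos ((m:ℝ) * θ) := by
    intro m
    have e1 : ((m:ℝ)+1) * θ = (m:ℝ)*θ + θ := by ring
    have e2 : ((m:ℝ)-1) * θ = (m:ℝ)*θ - θ := by ring
    rw [e1, e2, Real.cos_add, Real.cos_sub]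
    ring
  rcases Nat.eq_zero_or_pos (y:ℕ) with hy0 | hy1
  · rw [if_pos (by omega), if_neg (by omega), if_pos hy0, hy0]
    push_cast
    ring_nf
    simp [mul_comm]
  · rcases Nat.lt_or_ge (y:ℕ) w with hyw | hyw
    · rw [if_pos (by omega), if_pos (show 1 ≤ (y:ℕ) by omega), if_neg (by omega)]
      have hc1 : (((y:ℕ)+1 : ℕ) : ℝ) = ((y:ℕ):ℝ)+1 := by push_cast; ring
      have hc2 : (((y:ℕ)-1 : ℕ) : ℝ) = ((y:ℕ):ℝ)-1 := by
        have h1 : 1 ≤ (y:ℕ) := hy1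
        push_cast [h1]
        ring
      rw [hc1, hc2]
      linarith [hrec (y:ℕ)]
    · have hyeq : (y:ℕ) = w := by have := y.isLt; omega
      rw [if_neg (by omega), if_pos (show 1 ≤ (y:ℕ) by omega), if_neg (by omega)]
      have hc2 : (((y:ℕ)-1 : ℕ) : ℝ) = ((y:ℕ):ℝ)-1 := by
        push_cast [hy1]
        ring
      rw [hc2]
      have hz' : Real.cos ((((y:ℕ):ℝ)+1) * θ) = 0 := by
        have : ((y:ℕ):ℝ) = (w:ℝ) := by exact_mod_cast hyeq
        rw [this]
        exact cos_succ_theta w k (by omega)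
      linarith [hrec (y:ℕ), hz']

lemma delta_sum (w : ℕ) (x : Fin (w+1)) :
    ∑ k ∈ Finset.range (w+1), Real.cos ((x:ℕ) * theta w k)
      = if (x:ℕ) = 0 then ((w:ℝ)+1) else 0 := by
  rcases Nat.eq_zero_or_pos (x:ℕ) with hx0 | hx1
  · rw [if_pos hx0, hx0]
    simp
  · rw [if_neg (by omega)]
    set α : ℝ := (x:ℕ) * Real.pi / (2*((w:ℝ)+1)) with hα
    have hwpos : (0:ℝ) < (w:ℝ)+1 := by positivity
    have hαpos : 0 < α := by
      rw [hα]
      have : (0:ℝ) < (x:ℕ) := by exact_mod_cast hx1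
      positivity
    have hαlt : α < Real.pi := by
      rw [hα]
      rw [div_lt_iff₀ (by positivity)]
      have hx : ((x:ℕ):ℝ) < 2*((w:ℝ)+1) := by
        have := x.isLt
        have : ((x:ℕ):ℝ) ≤ (w:ℝ) := by exact_mod_cast Nat.lt_succ_iff.mp x.isLt
        linarith
      nlinarith [Real.pi_pos]
    have hsin : Real.sin α ≠ 0 := ne_of_gt (Real.sin_pos_of_pos_of_lt_pi hαpos hαlt)
    have hangle : ∀ k : ℕ, (x:ℕ) * theta w k = (2*(k:ℝ)+1) * α := by
      intro k
      rw [hα]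
      unfold theta
      field_simp
    have hterm : ∀ k : ℕ, 2 * Real.sin α * Real.cos ((2*(k:ℝ)+1) * α)
        = Real.sin (2*((k:ℝ)+1)*α) - Real.sin (2*(k:ℝ)*α) := by
      intro k
      have e1 : 2*((k:ℝ)+1)*α = (2*(k:ℝ)+1)*α + α := by ring
      have e2 : 2*(k:ℝ)*α = (2*(k:ℝ)+1)*α - α := by ring
      rw [e1, e2, Real.sin_add, Real.sin_sub]
      ring
    have htel : ∑ k ∈ Finset.range (w+1),
        (Real.sin (2*((k:ℝ)+1)*α) - Real.sin (2*(k:ℝ)*α))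
        = Real.sin (2*((w:ℝ)+1)*α) - Real.sin (2*(0:ℝ)*α) := by
      have := Finset.sum_range_sub (f := fun k : ℕ => Real.sin (2*(k:ℝ)*α)) (n := w+1)
      simpa using this
    have hend : Real.sin (2*((w:ℝ)+1)*α) = 0 := by
      have : 2*((w:ℝ)+1)*α = (x:ℕ) * Real.pi := by
        rw [hα]
        field_simp
      rw [this]
      exact Real.sin_nat_mul_pi _
    have hsum : 2 * Real.sin α * ∑ k ∈ Finset.range (w+1), Real.cos ((x:ℕ) * theta w k) = 0 := by
      rw [Finset.mul_sum]
      rw [Finset.sum_congr rfl (fun k _ => by rw [hangle k, hterm k])]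
      rw [htel, hend]
      simp
    have h2s : 2 * Real.sin α ≠ 0 := by
      intro h
      apply hsin
      linarith
    exact (mul_eq_zero.mp hsum).resolve_left h2s

lemma Wf_zero (w : ℕ) (i j : Fin (w+1)) : Wf 0 w i j = if i = j then 1 else 0 := by
  unfold Wf
  rw [← (Equiv.funUnique (Fin 1) (Fin (w+1))).symm.sum_comp]
  by_cases h : i = j
  · subst h
    simp [Fin.last, Equiv.funUnique]
  · simp [Fin.last, Equiv.funUnique, h]

lemma Wf_succ (n w : ℕ) (i j : Fin (w+1)) :
    Wf (n+1) w i j = ∑ y, F w i y * Wf n w y j := by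
  unfold Wf
  rw [← (Fin.consEquiv (fun _ : Fin (n+2) => Fin (w+1))).sum_comp, Fintype.sum_prod_type]
  have prodeq : ∀ (x : Fin (w+1)) (g : Fin (n+1) → Fin (w+1)),
      (∏ t : Fin (n+1), F w ((Fin.cons x g : ∀ _ : Fin (n+2), Fin (w+1)) t.castSucc)
        ((Fin.cons x g : ∀ _ : Fin (n+2), Fin (w+1)) t.succ))
      = F w x (g 0) * ∏ t : Fin n, F w (g t.castSucc) (g t.succ) := by
    intro x g
    rw [Fin.prod_univ_succ]
    simp [← Fin.succ_castSucc]
  calc (∑ x, ∑ g : Fin (n+1) → Fin (w+1),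
        if (Fin.cons x g : ∀ _ : Fin (n+2), Fin (w+1)) 0 = i ∧
            (Fin.cons x g : ∀ _ : Fin (n+2), Fin (w+1)) (Fin.last (n+1)) = j
        then ∏ t : Fin (n+1), F w ((Fin.cons x g : ∀ _ : Fin (n+2), Fin (w+1)) t.castSucc)
          ((Fin.cons x g : ∀ _ : Fin (n+2), Fin (w+1)) t.succ) else 0)
      = ∑ x, ∑ g : Fin (n+1) → Fin (w+1),
        if x = i then (if g (Fin.last n) = j then
          F w x (g 0) * ∏ t : Fin n, F w (g t.castSucc) (g t.succ) else 0) else 0 := by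
        apply Finset.sum_congr rfl; intro x _
        apply Finset.sum_congr rfl; intro g _
        rw [← Fin.succ_last, Fin.cons_zero, Fin.cons_succ, ite_and, prodeq]
    _ = ∑ g : Fin (n+1) → Fin (w+1),
        if g (Fin.last n) = j then
          F w i (g 0) * ∏ t : Fin n, F w (g t.castSucc) (g t.succ) else 0 := by
        rw [Finset.sum_comm]
        apply Finset.sum_congr rfl; intro g _
        simp
    _ = ∑ y, F w i y * ∑ g : Fin (n+1) → Fin (w+1),
        if g 0 = y ∧ g (Fin.last n) = j then ∏ t : Fin n, F w (g t.castSucc) (g t.succ) else 0 := by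
        simp_rw [Finset.mul_sum]
        rw [Finset.sum_comm]
        apply Finset.sum_congr rfl; intro g _
        rw [Finset.sum_eq_single (g 0)]
        · by_cases hj : g (Fin.last n) = j <;> simp [hj]
        · intro y _ hy
          simp [Ne.symm hy]
        · simp

lemma eigen_Wf (n w : ℕ) (v : Fin (w+1) → ℝ) (lam : ℝ)
    (hv : ∀ y, ∑ x, v x * F w x y = lam * v y) (j : Fin (w+1)) :
    ∑ x, v x * Wf n w x j = lam ^ n * v j := by
  induction n generalizing j with
  | zero =>
      rw [pow_zero, one_mul]
      simp only [Wf_zero, mul_ite, mul_one, mul_zero]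
      rw [Finset.sum_ite_eq' Finset.univ j v]
      simp
  | succ n ih =>
      simp_rw [Wf_succ]
      calc ∑ x, v x * ∑ y, F w x y * Wf n w y j
          = ∑ y, (∑ x, v x * F w x y) * Wf n w y j := by
            simp_rw [Finset.mul_sum]
            rw [Finset.sum_comm]
            apply Finset.sum_congr rfl; intro y _
            rw [Finset.sum_mul]
            apply Finset.sum_congr rfl; intro x _
            ring
        _ = ∑ y, (lam * v y) * Wf n w y j := by simp_rw [hv]
        _ = lam * ∑ y, v y * Wf n w y j := by
            rw [Finset.mul_sum]
            apply Finset.sum_congr rfl; intro y _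
            ring
        _ = lam ^ (n+1) * v j := by rw [ih]; ring



/-- exact expression for `Z_{n,w}(2,1)` for even `n`. -/
lemma Z_eq (n w : ℕ) : Z n w 2 1 = Wf n w 0 0 := by
  unfold Z Wf
  apply Finset.sum_congr rfl
  intro h _
  by_cases hend : h 0 = 0 ∧ h (Fin.last n) = 0
  · rw [if_pos hend]
    by_cases hstep : ∀ i : Fin n, |((h i.succ : ℤ) - (h i.castSucc : ℤ))| = 1
    · rw [if_pos (show IsLoop h from ⟨hend.1, hend.2, hstep⟩)]
      rw [one_pow, mul_one]
      have hF : ∀ t : Fin n, F w (h t.castSucc) (h t.succ)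
          = (if (h t.succ : ℕ) = 0 then (2:ℝ) else 1) := by
        intro t
        unfold F
        rw [if_pos (hstep t), one_mul]
      rw [Finset.prod_congr rfl (fun t _ => hF t)]
      calc (2:ℝ) ^ (Finset.univ.filter fun i : Fin (n+1) => i ≠ 0 ∧ (h i : ℕ) = 0).card
          = ∏ i : Fin (n+1), (if (i ≠ 0 ∧ (h i : ℕ) = 0) then (2:ℝ) else 1) := by
            rw [Finset.prod_ite, Finset.prod_const, Finset.prod_const_one, mul_one]
        _ = ∏ t : Fin n, (if (h t.succ : ℕ) = 0 then (2:ℝ) else 1) := by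
            rw [Fin.prod_univ_succ]
            simp [Fin.succ_ne_zero]
    · push_neg at hstep
      obtain ⟨t0, ht0⟩ := hstep
      rw [if_neg (show ¬ IsLoop h from fun hL => ht0 (hL.2.2 t0)),
        Finset.prod_eq_zero (Finset.mem_univ t0)
          (by unfold F; rw [if_neg ht0, zero_mul])]
  · rw [if_neg hend, if_neg (show ¬ IsLoop h from fun hL => hend ⟨hL.1, hL.2.1⟩)]

theorem Z_two_one (w n : ℕ) (hw : 1 ≤ w) (hn : Even n) :
    Z n w 2 1 = 2 ^ n / (2 * ((w : ℝ) + 1)) *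
      ∑ k ∈ Finset.range (2 * w + 2),
        Real.cos ((2 * (k : ℝ) + 1) * Real.pi / (2 * (w : ℝ) + 2)) ^ n := by
  have heig : ∀ k : ℕ, ∑ x : Fin (w+1), Real.cos ((x:ℕ) * theta w k) * Wf n w x 0
      = (2 * Real.cos (theta w k))^n * Real.cos ((((0:Fin (w+1)):ℕ) : ℝ) * theta w k) :=
    fun k => eigen_Wf n w _ _ (fun y => eigen_eq w k hw y) 0
  have hkey : ((w:ℝ)+1) * Wf n w 0 0
      = ∑ k ∈ Finset.range (w+1), (2 * Real.cos (theta w k))^n := by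
    have h0 : ((w:ℝ)+1) * Wf n w 0 0
        = ∑ x : Fin (w+1), (if (x:ℕ) = 0 then ((w:ℝ)+1) else 0) * Wf n w x 0 := by
      rw [Finset.sum_eq_single (0 : Fin (w+1))]
      · simp
      · intro x _ hx
        rw [if_neg, zero_mul]
        intro h'; apply hx; ext; simp [h']
      · simp
    rw [h0, Finset.sum_congr rfl (fun x _ => by rw [← delta_sum w x])]
    simp_rw [Finset.sum_mul]
    rw [Finset.sum_comm, Finset.sum_congr rfl (fun k _ => heig k)]
    simp
  have hang : ∀ k : ℕ, (2*(k:ℝ)+1) * Real.pi / (2*(w:ℝ)+2) = theta w k := by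
    intro k
    unfold theta
    ring_nf
  have hshift : ∀ k : ℕ, theta w ((w+1)+k) = theta w k + Real.pi := by
    intro k
    unfold theta
    have hne : (2*((w:ℝ)+1)) ≠ 0 := by positivity
    field_simp
    push_cast
    ring
  have hhalf : ∑ k ∈ Finset.range (2*w+2),
      Real.cos ((2*(k:ℝ)+1) * Real.pi / (2*(w:ℝ)+2)) ^ n
      = 2 * ∑ k ∈ Finset.range (w+1), Real.cos (theta w k) ^ n := by
    rw [Finset.sum_congr rfl (fun k _ => by rw [hang k])]
    rw [show 2*w+2 = (w+1) + (w+1) by ring]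
    rw [Finset.sum_range_add]
    have : ∀ k : ℕ, Real.cos (theta w ((w+1)+k)) ^ n = Real.cos (theta w k) ^ n := by
      intro k
      rw [hshift k, Real.cos_add_pi, hn.neg_pow]
    rw [Finset.sum_congr rfl (fun k _ => this k)]
    ring
  have hw1 : ((w:ℝ)+1) ≠ 0 := by positivity
  rw [Z_eq, hhalf]
  have hWf : Wf n w 0 0 = (∑ k ∈ Finset.range (w+1), (2 * Real.cos (theta w k))^n) / ((w:ℝ)+1) := by
    field_simp
    linarith [hkey]
  rw [hWf]
  simp_rw [mul_pow]
  rw [← Finset.mul_sum]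
  field_simp
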